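/- Let S be a nonempty set, f : S → ℕ ∪ {∞}, and suppose each d_p (p ∈ S) satisfies (d3). Then S̃^f satisfies (d3): for every short exact sequence 0 → K → L → N → 0, if S̃^f(L) < S̃^f(N) then S̃^f(K) ≤ S̃^f(L). -/
import Mathlib


universe u v

/-- A `d`-function: assigns to every `Λ`-module a value in `ℕ ∪ {∞}`. -/
abbrev DFun (Λ : Type u) [Ring Λ] :=
  (N : Type u) → [AddCommGroup N] → [Module Λ N] → ℕ∞

/-- Condition (d3): if `d L < d N` then `d K ≤ d L`. -/
def CondD3 (Λ : Type u) [Ring Λ] (d : DFun Λ) : Prop :=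
  ∀ (K L N : Type u) [AddCommGroup K] [Module Λ K] [AddCommGroup L] [Module Λ L]
    [AddCommGroup N] [Module Λ N] (f : K →ₗ[Λ] L) (g : L →ₗ[Λ] N),
    Function.Injective f → Function.Surjective g →
    LinearMap.range f = LinearMap.ker g →
    d L < d N → d K ≤ d L

/-- `S̃^f(N) = sup { i | d_p(N) ≥ min(i, f(p)) for all p ∈ S }`. -/
noncomputable def StildeF (Λ : Type u) [Ring Λ] {S : Type v} (d : S → DFun Λ)
    (f : S → ℕ∞) (N : Type u) [AddCommGroup N] [Module Λ N] : ℕ∞ :=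
  sSup {x : ℕ∞ | ∃ i : ℕ, x = (i : ℕ∞) ∧ ∀ p : S, min (i : ℕ∞) (f p) ≤ d p N}

/-- If each `d_p` satisfies (d3), then `S̃^f` satisfies (d3). -/
theorem stmt11 (Λ : Type u) [Ring Λ] (S : Type v) [Nonempty S]
    (d : S → DFun Λ) (f : S → ℕ∞) (hd : ∀ p : S, CondD3 Λ (d p)) :
    CondD3 Λ (fun N _ _ => StildeF Λ d f N) := by
  intro K L N _ _ _ _ _ _ φ ψ hφ hψ hrk h
  simp only at h ⊢
  refine sSup_le ?_
  rintro x ⟨i, rfl, hi⟩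
  by_contra hcon
  push_neg at hcon
  obtain ⟨y, ⟨n, rfl, hn⟩, hln⟩ := lt_sSup_iff.mp h
  set k := min i n with hk
  have hkL : StildeF Λ d f L < (k : ℕ∞) := by
    simp only [hk, Nat.cast_min]
    exact lt_min hcon hln
  have hnot : ¬ ∀ p, min (k : ℕ∞) (f p) ≤ d p L := by
    intro hall
    have hmem : (k : ℕ∞) ∈ {x : ℕ∞ | ∃ i : ℕ, x = (i : ℕ∞) ∧
        ∀ p : S, min (i : ℕ∞) (f p) ≤ d p L} := ⟨k, rfl, hall⟩
    exact absurd (le_sSup hmem) (not_le.mpr hkL)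
  push_neg at hnot
  obtain ⟨p, hp⟩ := hnot
  have h1 : (k : ℕ∞) ≤ (n : ℕ∞) := by exact_mod_cast min_le_right i n
  have h2 : (k : ℕ∞) ≤ (i : ℕ∞) := by exact_mod_cast min_le_left i n
  have hdLN : d p L < d p N :=
    lt_of_lt_of_le hp (le_trans (min_le_min h1 le_rfl) (hn p))
  have hKL : d p K ≤ d p L := hd p K L N φ ψ hφ hψ hrk hdLN
  have hKk : min (k : ℕ∞) (f p) ≤ d p K := le_trans (min_le_min h2 le_rfl) (hi p)
  exact absurd hKL (not_le.mpr (lt_of_lt_of_le hp hKk))
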